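/- Let k be a field, n a positive integer, and X a multiplicative subsemigroup of the matrix ring M_n(k) that is nilpotent, i.e., there is a positive integer m such that every product of m elements of X is the zero matrix. Then X is triangularizable: there is a basis of kⁿ with respect to which every element of X is upper triangular (in fact strictly upper triangular). -/

import Mathlib

open Submodule in
private lemma aux_chain {k V : Type*} [Field k] [AddCommGroup V] [Module k V]
    (W : ℕ → Submodule k V) (hW : ∀ i, W i ≤ W (i + 1)) (hW0 : W 0 = ⊥) :
    ∃ S : ℕ → Set V,
      (∀ i, S i ⊆ (W i : Set V)) ∧
      (∀ i, (W i : Set V) ⊆ (Submodule.span k (S i) : Set V)) ∧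
      (∀ i, LinearIndependent k ((↑) : S i → V)) ∧
      (∀ i j, i ≤ j → S i ⊆ S j) := by
  classical
  let P : ℕ → Type _ := fun j =>
    {s : Set V // s ⊆ (W j : Set V) ∧ LinearIndependent k ((↑) : s → V) ∧
      (W j : Set V) ⊆ (Submodule.span k s : Set V)}
  have base : P 0 := by
    refine ⟨∅, by simp [hW0], linearIndependent_empty k V, ?_⟩
    intro x hx
    rw [hW0] at hx
    simp only [SetLike.mem_coe, Submodule.mem_bot] at hx
    simp [hx]
  have EX : ∀ j (p : P j), ∃ b ⊆ (W (j + 1) : Set V), p.1 ⊆ b ∧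
      (W (j + 1) : Set V) ⊆ (Submodule.span k b : Set V) ∧
      LinearIndependent k ((↑) : b → V) := fun j p =>
    exists_linearIndepOn_id_extension p.2.2.1 (p.2.1.trans (hW j))
  let F : ∀ j, P j → P (j + 1) := fun j p =>
    ⟨Classical.choose (EX j p), (Classical.choose_spec (EX j p)).1,
      (Classical.choose_spec (EX j p)).2.2.2, (Classical.choose_spec (EX j p)).2.2.1⟩
  let G : ∀ j, P j := fun j => Nat.rec base F j
  refine ⟨fun j => (G j).1, fun j => (G j).2.1, fun j => (G j).2.2.2,
    fun j => (G j).2.2.1, ?_⟩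
  have step : ∀ j, (G j).1 ⊆ (G (j + 1)).1 := by
    intro j
    show (G j).1 ⊆ (F j (G j)).1
    exact (Classical.choose_spec (EX j (G j))).2.1
  intro i j hij
  induction j with
  | zero =>
    have h0 : i = 0 := Nat.le_zero.mp hij
    rw [h0]
  | succ j ih =>
    rcases Nat.lt_or_ge i (j + 1) with h | h
    · exact (ih (Nat.lt_succ_iff.mp h)).trans (step j)
    · have hh : i = j + 1 := le_antisymm hij h
      rw [hh]

theorem stmt_6 {k : Type*} [Field k] {n : ℕ} (hn : 0 < n)
    (X : Set (Matrix (Fin n) (Fin n) k))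
    (hmul : ∀ A ∈ X, ∀ B ∈ X, A * B ∈ X)
    (m : ℕ) (hm : 0 < m)
    (hnil : ∀ l : List (Matrix (Fin n) (Fin n) k),
      (∀ A ∈ l, A ∈ X) → l.length = m → l.prod = 0) :
    ∃ b : Module.Basis (Fin n) k (Fin n → k),
      (∀ T ∈ X, ∀ i : Fin n,
        Matrix.toLin' T (b i) ∈ Submodule.span k (⇑b '' {j | j ≤ i})) ∧
      (∀ T ∈ X, ∀ i : Fin n,
        Matrix.toLin' T (b i) ∈ Submodule.span k (⇑b '' {j | j < i})) := by
  classical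
  -- The descending chain W j = span of images of j-fold products
  let W : ℕ → Submodule k (Fin n → k) := fun j =>
    Nat.rec ⊤ (fun _ Wj => ⨆ T ∈ X, Submodule.map (Matrix.toLin' T) Wj) j
  have hWsucc : ∀ j, W (j + 1) = ⨆ T ∈ X, Submodule.map (Matrix.toLin' T) (W j) :=
    fun j => rfl
  have hmapW : ∀ T ∈ X, ∀ j, Submodule.map (Matrix.toLin' T) (W j) ≤ W (j + 1) := by
    intro T hT j
    exact (le_iSup₂ (f := fun T (_ : T ∈ X) => Submodule.map (Matrix.toLin' T) (W j)) T hT).trans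
      (le_of_eq (hWsucc j).symm)
  have hWanti : ∀ j, W (j + 1) ≤ W j := by
    intro j
    induction j with
    | zero => exact le_top
    | succ j ih =>
      rw [hWsucc (j+1), hWsucc j]
      exact iSup_mono fun T => iSup_mono fun _ => Submodule.map_mono ih
  have hWanti' : ∀ i j, i ≤ j → W j ≤ W i := by
    intro i j hij
    induction j with
    | zero => simp [Nat.le_zero.mp hij]
    | succ j ih =>
      rcases Nat.lt_or_ge i (j + 1) with h | h
      · exact (hWanti j).trans (ih (Nat.lt_succ_iff.mp h))
      · have : i = j + 1 := le_antisymm hij h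
        simp [this]
  -- W m = ⊥
  have hWm : W m = ⊥ := by
    have key : ∀ j, W j ≤ ⨆ l : {l : List (Matrix (Fin n) (Fin n) k) //
        (∀ A ∈ l, A ∈ X) ∧ l.length = j}, LinearMap.range (Matrix.toLin' l.1.prod) := by
      intro j
      induction j with
      | zero =>
        refine le_trans ?_ (le_iSup _ (⟨[], by simp, rfl⟩ : {l : List _ //
          (∀ A ∈ l, A ∈ X) ∧ l.length = 0}))
        simp [Matrix.toLin'_one]
      | succ j ih =>
        rw [hWsucc j]
        refine iSup₂_le fun T hT => ?_
        refine le_trans (Submodule.map_mono ih) ?_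
        rw [Submodule.map_iSup]
        refine iSup_le fun l => ?_
        rw [← LinearMap.range_comp, ← Matrix.toLin'_mul, ← List.prod_cons]
        exact le_iSup (fun l : {l : List _ // (∀ A ∈ l, A ∈ X) ∧ l.length = j + 1} =>
          LinearMap.range (Matrix.toLin' l.1.prod)) ⟨T :: l.1, by
            intro A hA
            rcases List.mem_cons.mp hA with h | h
            · exact h ▸ hT
            · exact l.2.1 A h, by simp [l.2.2]⟩
    refine le_bot_iff.mp ((key m).trans ?_)
    refine iSup_le fun l => ?_
    rw [hnil l.1 l.2.1 l.2.2, map_zero, LinearMap.range_zero]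
  -- ascending chain V j = W (m - j)
  set V : ℕ → Submodule k (Fin n → k) := fun j => W (m - j) with hV
  have hVmono : ∀ j, V j ≤ V (j + 1) := fun j => hWanti' _ _ (Nat.sub_le_sub_left (Nat.le_succ j) m)
  have hV0 : V 0 = ⊥ := by show W (m - 0) = ⊥; simpa using hWm
  have hVtop : ∀ j, m ≤ j → V j = ⊤ := by
    intro j hj
    simp [hV, Nat.sub_eq_zero_of_le hj, show W 0 = ⊤ from rfl]
  have hTV : ∀ T ∈ X, ∀ j, 1 ≤ j → Submodule.map (Matrix.toLin' T) (V j) ≤ V (j - 1) := by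
    intro T hT j hj
    refine le_trans (hmapW T hT (m - j)) ?_
    exact hWanti' (m - (j - 1)) (m - j + 1) (by omega)
  obtain ⟨S, hSsub, hSspan, hSli, hSmono⟩ := aux_chain V hVmono hV0
  -- the set S m is a basis set
  have hlim : LinearIndependent k ((↑) : S m → (Fin n → k)) := hSli m
  have hfin : (S m).Finite := hlim.setFinite
  have hsp : (⊤ : Submodule k (Fin n → k)) ≤ Submodule.span k (S m) := by
    intro x _
    exact hSspan m (by rw [hVtop m le_rfl]; trivial)
  -- cardinality
  have : Fintype (S m) := hfin.fintype
  have hcard : Fintype.card (S m) = n := by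
    have bS : Module.Basis (S m) k (Fin n → k) := Module.Basis.mk hlim (by rwa [Subtype.range_coe])
    have := Module.finrank_eq_card_basis bS
    rw [Module.finrank_fin_fun] at this
    omega
  -- level function
  set lev : (Fin n → k) → ℕ := fun x => sInf {j | x ∈ S j} with hlev
  -- sorted list
  set L := (hfin.toFinset.toList).mergeSort (fun a b => decide (lev a ≤ lev b)) with hL
  have hperm : List.Perm L hfin.toFinset.toList := List.mergeSort_perm _ _
  have hlen : L.length = n := by
    rw [hperm.length_eq, Finset.length_toList, Set.Finite.card_toFinset]
    exact hcard
  have hnodup : L.Nodup := hperm.nodup_iff.mpr (Finset.nodup_toList _)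
  have hmemL : ∀ x, x ∈ L ↔ x ∈ S m := by
    intro x
    rw [hperm.mem_iff, Finset.mem_toList, Set.Finite.mem_toFinset]
  have hsorted : L.Pairwise (fun a b => lev a ≤ lev b) := by
    have := List.pairwise_mergeSort (le := fun a b => decide (lev a ≤ lev b))
      (fun a b c h1 h2 => by simp_all; omega)
      (fun a b => by simp [Nat.le_total]) hfin.toFinset.toList
    rw [← hL] at this
    exact this.imp (by simp)
  -- the basis
  obtain ⟨e, he⟩ : ∃ e : Fin n → (Fin n → k),
      e = fun i => L.get (Fin.cast hlen.symm i) := ⟨_, rfl⟩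
  have heS : ∀ i, e i ∈ S m := fun i =>
    (hmemL _).mp (by rw [he]; exact List.mem_iff_get.mpr ⟨_, rfl⟩)
  have heinj : Function.Injective e := by
    intro i j hij
    rw [he] at hij
    have := List.nodup_iff_injective_get.mp hnodup hij
    simpa [Fin.ext_iff] using this
  have hrange : Set.range e = S m := by
    apply Set.Subset.antisymm
    · rintro _ ⟨i, rfl⟩; exact heS i
    · intro x hx
      obtain ⟨i, hi⟩ := List.mem_iff_get.mp ((hmemL x).mpr hx)
      rw [he]
      exact ⟨Fin.cast hlen i, hi⟩
  have heli : LinearIndependent k e := by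
    have : e = ((↑) : S m → (Fin n → k)) ∘ fun i => (⟨e i, heS i⟩ : S m) := rfl
    rw [this]
    exact hlim.comp _ fun i j hij => heinj (congrArg Subtype.val hij)
  have hesp : (⊤ : Submodule k (Fin n → k)) ≤ Submodule.span k (Set.range e) := by
    rw [hrange]; exact hsp
  refine ⟨Module.Basis.mk heli hesp, ?_⟩
  have hb : ∀ i, (Module.Basis.mk heli hesp) i = e i := fun i => Module.Basis.mk_apply heli hesp i
  -- level facts
  have hlevmem : ∀ x ∈ S m, x ∈ S (lev x) := by
    intro x hx
    exact Nat.sInf_mem (⟨m, hx⟩ : {j | x ∈ S j}.Nonempty)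
  have hlevle : ∀ x ∈ S m, lev x ≤ m := fun x hx => Nat.sInf_le hx
  have hlevpos : ∀ x ∈ S m, 1 ≤ lev x := by
    intro x hx
    by_contra h
    have h0 : lev x = 0 := by omega
    have hx0 : x ∈ S 0 := h0 ▸ hlevmem x hx
    have hxV : x ∈ (V 0 : Submodule k (Fin n → k)) := hSsub 0 hx0
    rw [hV0] at hxV
    simp only [Submodule.mem_bot] at hxV
    exact hlim.ne_zero (⟨x, hx⟩ : S m) hxV
  -- sorted implies index order
  have hsortedE : ∀ i j : Fin n, i < j → lev (e i) ≤ lev (e j) := by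
    intro i j h
    rw [he]
    exact List.pairwise_iff_get.mp hsorted _ _ (by simpa using h)
  have hord : ∀ i j : Fin n, lev (e j) < lev (e i) → j < i := by
    intro i j hlt
    by_contra h
    rcases eq_or_lt_of_le (not_lt.mp h) with h' | h'
    · rw [h'] at hlt; omega
    · have h3 := hsortedE i j h'
      omega
  -- the key strict claim
  have key : ∀ T ∈ X, ∀ i : Fin n,
      Matrix.toLin' T ((Module.Basis.mk heli hesp) i) ∈
        Submodule.span k (⇑(Module.Basis.mk heli hesp) '' {j | j < i}) := by
    intro T hT i
    rw [hb]
    set x := e i with hx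
    have hxS : x ∈ S m := heS i
    have h1 : 1 ≤ lev x := hlevpos x hxS
    have hTx : Matrix.toLin' T x ∈ V (lev x - 1) := by
      apply hTV T hT (lev x) h1
      exact ⟨x, hSsub (lev x) (hlevmem x hxS), rfl⟩
    have hTx2 : Matrix.toLin' T x ∈ Submodule.span k (S (lev x - 1)) := hSspan _ hTx
    have hlm : lev x ≤ m := hlevle x hxS
    refine Submodule.span_le.mpr ?_ hTx2
    intro y hy
    have hySm : y ∈ S m := hSmono (lev x - 1) m (by omega) hy
    have hyr : y ∈ Set.range e := by rw [hrange]; exact hySm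
    obtain ⟨jy, hjy⟩ := hyr
    have hylev : lev y ≤ lev x - 1 := Nat.sInf_le hy
    have hjlt : jy < i := hord i jy (by rw [hjy, ← hx]; omega)
    exact Submodule.subset_span ⟨jy, hjlt, by rw [hb]; exact hjy⟩
  refine ⟨fun T hT i => ?_, key⟩
  exact Submodule.span_mono (Set.image_mono fun j (hj : j < i) => le_of_lt hj) (key T hT i)
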